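/- Assume 𝔽 is ℙ-immersed in 𝔽 ∨ 𝔾. If X is an (𝔽,𝔾)-doubly stochastic Markov chain, then X is an (𝔽,𝔾)-conditional Markov chain: for all x_1,…,x_k ∈ S and 0 ≤ t ≤ t_1 ≤ … ≤ t_k ≤ T, ℙ(X_{t_1}=x_1,…,X_{t_k}=x_k | ℱ_t ∨ 𝒢_t) = ℙ(X_{t_1}=x_1,…,X_{t_k}=x_k | ℱ_t ∨ σ(X_t)). -/

import Mathlib

open MeasureTheory ProbabilityTheory

variable {Ω : Type*}

/-- The real-valued indicator of the event `{X t = y}`. -/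
def ind {d : ℕ} (X : ℝ → Ω → Fin d) (t : ℝ) (y : Fin d) : Ω → ℝ :=
  fun ω => if X t ω = y then 1 else 0

/-- `X` is an `(𝔽,𝔾)`-doubly stochastic Markov chain on `[0,T]`:
`ℙ(X_t = y | ℱ_T ∨ 𝒢_s) = ℙ(X_t = y | ℱ_t ∨ σ(X_s))` for `0 ≤ s ≤ t ≤ T`. -/
def IsDSMC {m0 : MeasurableSpace Ω} (μ : Measure Ω) (ℱ 𝒢 : Filtration ℝ m0) (T : ℝ)
    {d : ℕ} (X : ℝ → Ω → Fin d) : Prop :=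
  ∀ s t : ℝ, 0 ≤ s → s ≤ t → t ≤ T → ∀ y : Fin d,
    μ[ind X t y | (ℱ T : MeasurableSpace Ω) ⊔ 𝒢 s]
      =ᵐ[μ] μ[ind X t y | (ℱ t : MeasurableSpace Ω) ⊔ MeasurableSpace.comap (X s) ⊤]

/-- The conditional transition probability field `p_{xy}(s,t)` of `X`:
`ℙ(X_t = y, X_s = x | ℱ_t)/ℙ(X_s = x | ℱ_t)` on `{ℙ(X_s = x | ℱ_t) > 0}` and
`1_{x = y}` otherwise. -/
noncomputable def ctf {m0 : MeasurableSpace Ω} (μ : Measure Ω) (ℱ : Filtration ℝ m0)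
    {d : ℕ} (X : ℝ → Ω → Fin d) (s t : ℝ) (x y : Fin d) (ω : Ω) : ℝ :=
  if 0 < condExp (ℱ t) μ (ind X s x) ω then
    condExp (ℱ t) μ (fun ω' => ind X t y ω' * ind X s x ω') ω / condExp (ℱ t) μ (ind X s x) ω
  else if x = y then 1 else 0

/-! ### Auxiliary material -/

open Filter Set
open scoped ENNReal Classical

section DD
variable {d : ℕ}

lemma sup_comap_set (m : MeasurableSpace Ω) (X : Ω → Fin d) {A : Set Ω}
    (hA : MeasurableSet[m ⊔ MeasurableSpace.comap X ⊤] A) (x : Fin d) :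
    ∃ B, MeasurableSet[m] B ∧ A ∩ X ⁻¹' {x} = B ∩ X ⁻¹' {x} := by
  let M : MeasurableSpace Ω :=
  { MeasurableSet' := fun A =>
      ∀ x : Fin d, ∃ B, MeasurableSet[m] B ∧ A ∩ X ⁻¹' {x} = B ∩ X ⁻¹' {x}
    measurableSet_empty := fun x => ⟨∅, MeasurableSet.empty, by simp⟩
    measurableSet_compl := by
      intro A hA x
      obtain ⟨B, hB, hAB⟩ := hA x
      refine ⟨Bᶜ, hB.compl, ?_⟩
      have key : ∀ ω, X ω = x → (ω ∈ A ↔ ω ∈ B) := by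
        intro ω hω
        have h := Set.ext_iff.mp hAB ω
        simpa [Set.mem_preimage, hω] using h
      ext ω
      by_cases hω : X ω = x
      · simp [Set.mem_preimage, hω, key ω hω]
      · simp [Set.mem_preimage, hω]
    measurableSet_iUnion := by
      intro A hA x
      choose B hB hAB using fun n => hA n x
      refine ⟨⋃ n, B n, MeasurableSet.iUnion hB, ?_⟩
      rw [Set.iUnion_inter, Set.iUnion_inter]
      exact Set.iUnion_congr hAB }
  have hle : m ⊔ MeasurableSpace.comap X ⊤ ≤ M := by
    refine sup_le ?_ ?_
    · intro A hA x; exact ⟨A, hA, rfl⟩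
    · rintro A ⟨S, -, rfl⟩ x
      refine ⟨if x ∈ S then Set.univ else ∅, by split <;> simp, ?_⟩
      ext ω
      by_cases hω : X ω = x <;> by_cases hx : x ∈ S <;> simp_all [Set.mem_preimage]
  exact hle A hA x

lemma simpleFunc_decomp (m : MeasurableSpace Ω) (X : Ω → Fin d)
    (g : @SimpleFunc Ω (m ⊔ MeasurableSpace.comap X ⊤) ℝ) :
    ∃ F : Fin d → Ω → ℝ, (∀ x, Measurable[m] (F x)) ∧ ∀ ω, F (X ω) ω = g ω := by
  refine @SimpleFunc.induction Ω ℝ (m ⊔ MeasurableSpace.comap X ⊤) _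
    (fun g => ∃ F : Fin d → Ω → ℝ, (∀ x, Measurable[m] (F x)) ∧ ∀ ω, F (X ω) ω = g ω)
    ?_ ?_ g
  · intro c s hs
    choose B hB hsB using sup_comap_set m X hs
    refine ⟨fun x ω => if ω ∈ B x then c else 0,
      fun x => Measurable.ite (hB x) measurable_const measurable_const, fun ω => ?_⟩
    have h1 : ω ∈ B (X ω) ↔ ω ∈ s := by
      have h := Set.ext_iff.mp (hsB (X ω)) ω
      simp [Set.mem_preimage] at h
      tauto
    simp only [SimpleFunc.piecewise_apply, SimpleFunc.coe_const, Function.const_apply,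
      SimpleFunc.coe_zero, Pi.zero_apply]
    rw [if_congr h1 rfl rfl]
  · rintro f g - ⟨F, hF, hFf⟩ ⟨G, hG, hGg⟩
    exact ⟨fun x ω => F x ω + G x ω, fun x => (hF x).add (hG x),
      fun ω => by simp [hFf ω, hGg ω]⟩

lemma exists_section (m : MeasurableSpace Ω) (X : Ω → Fin d) (f : Ω → ℝ)
    (hf : Measurable[m ⊔ MeasurableSpace.comap X ⊤] f)
    (h0 : ∀ ω, 0 ≤ f ω) (h1 : ∀ ω, f ω ≤ 1) :
    ∃ F : Fin d → Ω → ℝ, (∀ x, Measurable[m] (F x)) ∧ (∀ x ω, 0 ≤ F x ω)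
      ∧ (∀ x ω, F x ω ≤ 1) ∧ ∀ ω, F (X ω) ω = f ω := by
  have hsm : StronglyMeasurable[m ⊔ MeasurableSpace.comap X ⊤] f := hf.stronglyMeasurable
  choose G hG hGf using fun n => simpleFunc_decomp m X (hsm.approx n)
  set E : Fin d → Ω → ℝ≥0∞ := fun x ω => ⨅ n : ℕ, ⨆ i : ℕ, ENNReal.ofReal (G (i + n) x ω)
    with hE
  have hEmeas : ∀ x, Measurable[m] (E x) := fun x =>
    Measurable.iInf fun n => Measurable.iSup fun i =>
      ENNReal.measurable_ofReal.comp (hG (i + n) x)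
  have hEval : ∀ ω, E (X ω) ω = ENNReal.ofReal (f ω) := by
    intro ω
    have htend : Tendsto (fun n => ENNReal.ofReal (G n (X ω) ω)) atTop
        (nhds (ENNReal.ofReal (f ω))) := by
      have h2 := (ENNReal.continuous_ofReal.tendsto (f ω)).comp (hsm.tendsto_approx ω)
      have h3 : (fun n => ENNReal.ofReal (G n (X ω) ω))
          = fun n => ENNReal.ofReal ((hsm.approx n) ω) := funext fun n => by rw [hGf n ω]
      rw [h3]; exact h2
    have hls := htend.limsup_eq
    rw [limsup_eq_iInf_iSup_of_nat'] at hls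
    exact hls
  refine ⟨fun x ω => min 1 (E x ω).toReal,
    fun x => measurable_const.min (ENNReal.measurable_toReal.comp (hEmeas x)),
    fun x ω => le_min zero_le_one ENNReal.toReal_nonneg,
    fun x ω => min_le_left _ _, fun ω => ?_⟩
  show min 1 (E (X ω) ω).toReal = f ω
  rw [hEval ω, ENNReal.toReal_ofReal (h0 ω)]
  exact min_eq_right (h1 ω)

lemma ind_nonneg (X : ℝ → Ω → Fin d) (t : ℝ) (y : Fin d) (ω : Ω) : 0 ≤ ind X t y ω := by
  unfold ind; split <;> norm_num

lemma ind_le_one (X : ℝ → Ω → Fin d) (t : ℝ) (y : Fin d) (ω : Ω) : ind X t y ω ≤ 1 := by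
  unfold ind; split <;> norm_num

lemma ind_abs_le (X : ℝ → Ω → Fin d) (t : ℝ) (y : Fin d) (ω : Ω) : |ind X t y ω| ≤ 1 :=
  abs_le.mpr ⟨by linarith [ind_nonneg X t y ω], ind_le_one X t y ω⟩

lemma measurable_ind {m : MeasurableSpace Ω} (X : ℝ → Ω → Fin d) (t : ℝ) (y : Fin d)
    (hX : Measurable[m] (X t)) : Measurable[m] (ind X t y) := by
  have hset : MeasurableSet[m] {ω | X t ω = y} := hX (measurableSet_singleton y)
  exact Measurable.ite hset measurable_const measurable_const

lemma abs_mul_le_one {a b : ℝ} (ha : |a| ≤ 1) (hb : |b| ≤ 1) : |a * b| ≤ 1 := by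
  rw [abs_mul]; nlinarith [abs_nonneg a, abs_nonneg b]

lemma bdd_int {m0 : MeasurableSpace Ω} (μ : Measure Ω) [IsProbabilityMeasure μ] {f : Ω → ℝ}
    (hf : AEStronglyMeasurable f μ) (h : ∀ ω, |f ω| ≤ 1) : Integrable f μ :=
  (integrable_const 1).mono' hf (Eventually.of_forall fun ω => by
    simpa [Real.norm_eq_abs] using h ω)

lemma ts_chain {ts : ℕ → ℝ} {k : ℕ} (h : ∀ i, 1 ≤ i → i < k → ts i ≤ ts (i + 1))
    {i j : ℕ} (h1 : 1 ≤ i) (hij : i ≤ j) (hjk : j ≤ k) : ts i ≤ ts j := by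
  induction j with
  | zero => exact absurd (h1.trans hij) (by omega)
  | succ j ih =>
    rcases Nat.eq_or_lt_of_le hij with he | hl
    · rw [he]
    · have hij' : i ≤ j := by omega
      exact (ih hij' (by omega)).trans (h j (by omega) (by omega))

end DD

section Key
variable {d : ℕ}

lemma key_decomp {m0 : MeasurableSpace Ω} (μ : Measure Ω) [IsProbabilityMeasure μ]
    (ℱ 𝒢 : Filtration ℝ m0) (T : ℝ) (X : ℝ → Ω → Fin d)
    (hadp : ∀ t : ℝ, Measurable[𝒢 t] (X t)) (hX : IsDSMC μ ℱ 𝒢 T X) :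
    ∀ (k : ℕ) (s : ℝ) (ts : ℕ → ℝ) (xs : ℕ → Fin d),
      0 ≤ s → (∀ i, 1 ≤ i → i ≤ k → s ≤ ts i) →
      (∀ i, 1 ≤ i → i < k → ts i ≤ ts (i + 1)) → ts k ≤ T →
      ∃ η : Ω → ℝ,
        Measurable[(ℱ T : MeasurableSpace Ω) ⊔ MeasurableSpace.comap (X s) ⊤] η ∧
        μ[(fun ω => ∏ i ∈ Finset.Icc 1 k, ind X (ts i) (xs i) ω) |
            (ℱ T : MeasurableSpace Ω) ⊔ 𝒢 s] =ᵐ[μ] η := by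
  intro k
  induction k with
  | zero =>
    intro s ts xs hs0 _ _ _
    refine ⟨fun _ => 1, measurable_const, ?_⟩
    have hZ : (fun ω => ∏ i ∈ Finset.Icc 1 0, ind X (ts i) (xs i) ω) = fun _ : Ω => (1:ℝ) := by
      funext ω; simp
    rw [hZ, condExp_const (sup_le (ℱ.le T) (𝒢.le s))]
  | succ k ih =>
    intro s ts xs hs0 hsts hmono hT
    by_cases hk : k = 0
    · subst hk
      have hZ : (fun ω => ∏ i ∈ Finset.Icc 1 1, ind X (ts i) (xs i) ω)
          = ind X (ts 1) (xs 1) := by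
        funext ω; simp
      refine ⟨μ[ind X (ts 1) (xs 1) |
          (ℱ (ts 1) : MeasurableSpace Ω) ⊔ MeasurableSpace.comap (X s) ⊤], ?_, ?_⟩
      · exact stronglyMeasurable_condExp.measurable.mono
          (sup_le_sup_right (ℱ.mono hT) _) le_rfl
      · rw [hZ]; exact hX s (ts 1) hs0 (hsts 1 le_rfl le_rfl) hT (xs 1)
    · have hk1 : 1 ≤ k := Nat.one_le_iff_ne_zero.mpr hk
      have hmono' : ∀ i, 1 ≤ i → i < k → ts i ≤ ts (i + 1) :=
        fun i a b => hmono i a (Nat.lt_succ_of_lt b)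
      have hsk : s ≤ ts k := hsts k hk1 (Nat.le_succ k)
      have hk2 : ts k ≤ ts (k + 1) := hmono k hk1 (Nat.lt_succ_self k)
      have htkT : ts k ≤ T := hk2.trans hT
      set mM : MeasurableSpace Ω := (ℱ T : MeasurableSpace Ω) ⊔ 𝒢 s with hmM
      set mM' : MeasurableSpace Ω := (ℱ T : MeasurableSpace Ω) ⊔ 𝒢 (ts k) with hmM'
      have hmMle : mM ≤ m0 := sup_le (ℱ.le T) (𝒢.le s)
      have hmM'le : mM' ≤ m0 := sup_le (ℱ.le T) (𝒢.le (ts k))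
      have hMM' : mM ≤ mM' := sup_le_sup_left (𝒢.mono hsk) _
      set Z : Ω → ℝ := fun ω => ∏ i ∈ Finset.Icc 1 k, ind X (ts i) (xs i) ω with hZdef
      have hZmeas : Measurable[𝒢 (ts k)] Z := by
        refine Finset.measurable_prod _ fun i hi => ?_
        obtain ⟨hi1, hik⟩ := Finset.mem_Icc.mp hi
        exact (measurable_ind X (ts i) (xs i) (hadp (ts i))).mono
          (𝒢.mono (ts_chain hmono' hi1 hik le_rfl)) le_rfl
      have hZ0 : ∀ ω, 0 ≤ Z ω := fun ω => Finset.prod_nonneg fun i _ => ind_nonneg X _ _ ω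
      have hZ1 : ∀ ω, Z ω ≤ 1 := fun ω =>
        Finset.prod_le_one (fun i _ => ind_nonneg X _ _ ω) (fun i _ => ind_le_one X _ _ ω)
      have hZabs : ∀ ω, |Z ω| ≤ 1 := fun ω => abs_le.mpr ⟨by linarith [hZ0 ω], hZ1 ω⟩
      set mh : MeasurableSpace Ω :=
        (ℱ (ts (k + 1)) : MeasurableSpace Ω) ⊔ MeasurableSpace.comap (X (ts k)) ⊤ with hmh
      have hcomap_le : MeasurableSpace.comap (X (ts k)) ⊤ ≤ 𝒢 (ts k) := by
        rintro A ⟨S, -, rfl⟩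
        exact hadp (ts k) (S.toFinite.measurableSet)
      have hmhle : mh ≤ m0 := sup_le (ℱ.le _) (hcomap_le.trans (𝒢.le _))
      set h : Ω → ℝ := μ[ind X (ts (k + 1)) (xs (k + 1)) | mh] with hhdef
      have hds : μ[ind X (ts (k + 1)) (xs (k + 1)) | mM'] =ᵐ[μ] h :=
        hX (ts k) (ts (k + 1)) (hs0.trans hsk) hk2 hT (xs (k + 1))
      set h' : Ω → ℝ := fun ω => min 1 (max 0 (h ω)) with hh'def
      have hind_int : Integrable (ind X (ts (k + 1)) (xs (k + 1))) μ :=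
        bdd_int μ ((measurable_ind X _ _ (hadp _)).mono (𝒢.le _) le_rfl).aestronglyMeasurable
          (ind_abs_le X _ _)
      have hha : h' =ᵐ[μ] h := by
        have hge : 0 ≤ᵐ[μ] h := condExp_nonneg (Eventually.of_forall (ind_nonneg X _ _))
        have hle : h ≤ᵐ[μ] fun _ => (1:ℝ) := by
          have hm := condExp_mono (μ := μ) (m := mh) hind_int (integrable_const (1:ℝ))
            (Eventually.of_forall (ind_le_one X _ _))
          rwa [condExp_const hmhle] at hm
        filter_upwards [hge, hle] with ω h1 h2
        simp only [Pi.zero_apply] at h1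
        show min 1 (max 0 (h ω)) = h ω
        rw [max_eq_right h1, min_eq_right h2]
      have hh'meas : Measurable[mh] h' :=
        measurable_const.min (measurable_const.max stronglyMeasurable_condExp.measurable)
      obtain ⟨F2, hF2meas, hF20, hF21, hF2id⟩ :=
        exists_section (ℱ (ts (k + 1)) : MeasurableSpace Ω) (X (ts k)) h' hh'meas
          (fun ω => le_min zero_le_one (le_max_left 0 _)) (fun ω => min_le_left _ _)
      have hcol : ∀ ω, Z ω * h' ω = Z ω * F2 (xs k) ω := by
        intro ω
        rcases eq_or_ne (Z ω) 0 with hz | hz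
        · rw [hz, zero_mul, zero_mul]
        · have hne : ind X (ts k) (xs k) ω ≠ 0 := by
            intro h0
            exact hz (Finset.prod_eq_zero (Finset.mem_Icc.mpr ⟨hk1, le_rfl⟩) h0)
          have hXk : X (ts k) ω = xs k := by
            by_contra hne'
            exact hne (by simp [ind, hne'])
          have hFh : F2 (xs k) ω = h' ω := by rw [← hXk]; exact hF2id ω
          rw [hFh]
      obtain ⟨η₀, hη₀meas, hη₀⟩ := ih s ts xs hs0
        (fun i a b => hsts i a (b.trans (Nat.le_succ k))) hmono' htkT
      refine ⟨fun ω => F2 (xs k) ω * η₀ ω, ?_, ?_⟩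
      · exact (((hF2meas (xs k)).mono (le_trans (ℱ.mono hT)
          (le_sup_left : (ℱ T : MeasurableSpace Ω) ≤ _ ⊔ MeasurableSpace.comap (X s) ⊤))
          le_rfl).mul hη₀meas)
      · have hsplit : (fun ω => ∏ i ∈ Finset.Icc 1 (k + 1), ind X (ts i) (xs i) ω)
            = fun ω => Z ω * ind X (ts (k + 1)) (xs (k + 1)) ω := by
          funext ω
          exact Finset.prod_Icc_succ_top (by omega) _
        have hZint : Integrable Z μ :=
          bdd_int μ ((hZmeas.mono (𝒢.le _) le_rfl)).aestronglyMeasurable hZabs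
        have hZind_int : Integrable (fun ω => Z ω * ind X (ts (k + 1)) (xs (k + 1)) ω) μ :=
          bdd_int μ (((hZmeas.mono (𝒢.le _) le_rfl).mul
            ((measurable_ind X _ _ (hadp _)).mono (𝒢.le _) le_rfl)).aestronglyMeasurable)
            (fun ω => abs_mul_le_one (hZabs ω) (ind_abs_le X _ _ ω))
        have step1 : μ[(fun ω => Z ω * ind X (ts (k + 1)) (xs (k + 1)) ω) | mM']
            =ᵐ[μ] fun ω => Z ω * h' ω := by
          have hZsm : StronglyMeasurable[mM'] Z :=
            (hZmeas.mono (le_sup_right : (𝒢 (ts k) : MeasurableSpace Ω) ≤ mM') le_rfl).stronglyMeasurable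
          have hmul := condExp_mul_of_stronglyMeasurable_left (μ := μ) hZsm hZind_int hind_int
          refine hmul.trans ?_
          filter_upwards [hds, hha] with ω h1 h2
          show Z ω * (μ[ind X (ts (k + 1)) (xs (k + 1)) | mM']) ω = Z ω * h' ω
          rw [h1, h2]
        have step2 : μ[(fun ω => ∏ i ∈ Finset.Icc 1 (k + 1), ind X (ts i) (xs i) ω) | mM]
            =ᵐ[μ] μ[(fun ω => F2 (xs k) ω * Z ω) | mM] := by
          refine ((condExp_condExp_of_le hMM' hmM'le).symm).trans ?_
          refine condExp_congr_ae ?_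
          rw [hsplit]
          refine step1.trans (Eventually.of_forall fun ω => ?_)
          show Z ω * h' ω = F2 (xs k) ω * Z ω
          rw [hcol ω]; ring
        have hFZ_int : Integrable (fun ω => F2 (xs k) ω * Z ω) μ :=
          bdd_int μ ((((hF2meas (xs k)).mono (ℱ.le _) le_rfl).mul
            (hZmeas.mono (𝒢.le _) le_rfl)).aestronglyMeasurable)
            (fun ω => abs_mul_le_one
              (abs_le.mpr ⟨by linarith [hF20 (xs k) ω], hF21 (xs k) ω⟩) (hZabs ω))
        have step3 : μ[(fun ω => F2 (xs k) ω * Z ω) | mM]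
            =ᵐ[μ] fun ω => F2 (xs k) ω * η₀ ω := by
          have hF2sm : StronglyMeasurable[mM] (F2 (xs k)) :=
            ((hF2meas (xs k)).mono (le_trans (ℱ.mono hT)
              (le_sup_left : (ℱ T : MeasurableSpace Ω) ≤ mM)) le_rfl).stronglyMeasurable
          have hmul := condExp_mul_of_stronglyMeasurable_left (μ := μ) hF2sm hFZ_int hZint
          refine hmul.trans ?_
          filter_upwards [hη₀] with ω h1
          show F2 (xs k) ω * (μ[Z | mM]) ω = F2 (xs k) ω * η₀ ω
          rw [h1]
        exact step2.trans step3

end Key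

/-- If `𝔽` is `ℙ`-immersed in `𝔽 ∨ 𝔾` (expressed by the standard characterization via
conditional expectations of bounded `ℱ_T`-measurable random variables) and `X` is an
`(𝔽,𝔾)`-DSMC, then `X` is an `(𝔽,𝔾)`-conditional Markov chain: for all states
`x_1, …, x_k` and times `0 ≤ t ≤ t_1 ≤ … ≤ t_k ≤ T`,
`ℙ(X_{t_1} = x_1, …, X_{t_k} = x_k | ℱ_t ∨ 𝒢_t)
  = ℙ(X_{t_1} = x_1, …, X_{t_k} = x_k | ℱ_t ∨ σ(X_t))` a.s. -/
theorem dsmc_is_cmc_under_immersion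
    {m0 : MeasurableSpace Ω} (μ : Measure Ω) [IsProbabilityMeasure μ]
    (ℱ 𝒢 : Filtration ℝ m0) (T : ℝ) (hT : 0 < T) (d : ℕ) (X : ℝ → Ω → Fin d)
    (hadp : ∀ t : ℝ, Measurable[𝒢 t] (X t))
    -- immersion of 𝔽 in 𝔽 ∨ 𝔾
    (himm : ∀ ψ : Ω → ℝ, Measurable[ℱ T] ψ → (∃ C, ∀ ω, |ψ ω| ≤ C) →
      ∀ t ∈ Set.Icc (0:ℝ) T,
        μ[ψ | (ℱ t : MeasurableSpace Ω) ⊔ 𝒢 t] =ᵐ[μ] μ[ψ | ℱ t])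
    (hX : IsDSMC μ ℱ 𝒢 T X) :
    ∀ (k : ℕ) (t : ℝ) (ts : ℕ → ℝ) (xs : ℕ → Fin d),
      0 ≤ t → (∀ i, 1 ≤ i → i ≤ k → t ≤ ts i) →
      (∀ i, 1 ≤ i → i < k → ts i ≤ ts (i + 1)) → ts k ≤ T →
      μ[(fun ω => ∏ i ∈ Finset.Icc 1 k, ind X (ts i) (xs i) ω) |
          (ℱ t : MeasurableSpace Ω) ⊔ 𝒢 t]
        =ᵐ[μ] μ[(fun ω => ∏ i ∈ Finset.Icc 1 k, ind X (ts i) (xs i) ω) |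
          (ℱ t : MeasurableSpace Ω) ⊔ MeasurableSpace.comap (X t) ⊤] := by
  intro k t ts xs ht0 hts hmono htsk
  have hcomap : MeasurableSpace.comap (X t) ⊤ ≤ (𝒢 t : MeasurableSpace Ω) := by
    rintro A ⟨S, -, rfl⟩
    exact hadp t (S.toFinite.measurableSet)
  by_cases hk : k = 0
  · subst hk
    have hZ : (fun ω => ∏ i ∈ Finset.Icc 1 0, ind X (ts i) (xs i) ω) = fun _ : Ω => (1:ℝ) := by
      funext ω; simp
    rw [hZ, condExp_const (sup_le (ℱ.le t) (𝒢.le t)),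
      condExp_const (sup_le (ℱ.le t) (hcomap.trans (𝒢.le t)))]
  · have hk1 : 1 ≤ k := Nat.one_le_iff_ne_zero.mpr hk
    have htt1 : t ≤ ts 1 := hts 1 le_rfl hk1
    have htT : t ≤ T := htt1.trans ((ts_chain hmono le_rfl hk1 le_rfl).trans htsk)
    set mA : MeasurableSpace Ω := (ℱ t : MeasurableSpace Ω) ⊔ 𝒢 t with hmAdef
    set mB : MeasurableSpace Ω :=
      (ℱ t : MeasurableSpace Ω) ⊔ MeasurableSpace.comap (X t) ⊤ with hmBdef
    set mC : MeasurableSpace Ω := (ℱ T : MeasurableSpace Ω) ⊔ 𝒢 t with hmCdef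
    have hmA : mA ≤ m0 := sup_le (ℱ.le t) (𝒢.le t)
    have hmB : mB ≤ m0 := sup_le (ℱ.le t) (hcomap.trans (𝒢.le t))
    have hmC : mC ≤ m0 := sup_le (ℱ.le T) (𝒢.le t)
    have hAC : mA ≤ mC := sup_le_sup_right (ℱ.mono htT) _
    have hBA : mB ≤ mA := sup_le_sup_left hcomap _
    have hBC : mB ≤ mC := hBA.trans hAC
    obtain ⟨η, hηmeas, hη⟩ := key_decomp μ ℱ 𝒢 T X hadp hX k t ts xs ht0 hts hmono htsk
    set Z : Ω → ℝ := fun ω => ∏ i ∈ Finset.Icc 1 k, ind X (ts i) (xs i) ω with hZdef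
    have hZ0 : ∀ ω, 0 ≤ Z ω := fun ω => Finset.prod_nonneg fun i _ => ind_nonneg X _ _ ω
    have hZ1 : ∀ ω, Z ω ≤ 1 := fun ω =>
      Finset.prod_le_one (fun i _ => ind_nonneg X _ _ ω) (fun i _ => ind_le_one X _ _ ω)
    have hZabs : ∀ ω, |Z ω| ≤ 1 := fun ω => abs_le.mpr ⟨by linarith [hZ0 ω], hZ1 ω⟩
    have hZmeas : Measurable[m0] Z := by
      refine Finset.measurable_prod _ fun i hi => ?_
      exact (measurable_ind X (ts i) (xs i) (hadp (ts i))).mono (𝒢.le _) le_rfl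
    have hZint : Integrable Z μ := bdd_int μ hZmeas.aestronglyMeasurable hZabs
    set η' : Ω → ℝ := fun ω => min 1 (max 0 (η ω)) with hη'def
    have hη' : μ[Z | mC] =ᵐ[μ] η' := by
      have hge : 0 ≤ᵐ[μ] μ[Z | mC] := condExp_nonneg (Filter.Eventually.of_forall hZ0)
      have hle : μ[Z | mC] ≤ᵐ[μ] fun _ => (1:ℝ) := by
        have hm := condExp_mono (μ := μ) (m := mC) hZint (integrable_const (1:ℝ))
          (Filter.Eventually.of_forall hZ1)
        rwa [condExp_const hmC] at hm
      filter_upwards [hη, hge, hle] with ω h1 h2 h3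
      simp only [Pi.zero_apply] at h2
      show (μ[Z | mC]) ω = min 1 (max 0 (η ω))
      rw [← h1, max_eq_right h2, min_eq_right h3]
    have hη'meas :
        Measurable[(ℱ T : MeasurableSpace Ω) ⊔ MeasurableSpace.comap (X t) ⊤] η' :=
      measurable_const.min (measurable_const.max hηmeas)
    obtain ⟨F, hFmeas, hF0, hF1, hFid⟩ := exists_section (ℱ T : MeasurableSpace Ω) (X t) η'
      hη'meas (fun ω => le_min zero_le_one (le_max_left 0 _)) (fun ω => min_le_left _ _)
    have hFabs : ∀ x ω, |F x ω| ≤ 1 :=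
      fun x ω => abs_le.mpr ⟨by linarith [hF0 x ω], hF1 x ω⟩
    have hsum : η' = fun ω => ∑ x : Fin d, ind X t x ω * F x ω := by
      funext ω
      rw [show η' ω = F (X t ω) ω from (hFid ω).symm]
      rw [Finset.sum_eq_single (X t ω)]
      · simp [ind]
      · intro b _ hb
        have hne : ¬ (X t ω = b) := fun hc => hb hc.symm
        simp only [ind, if_neg hne, zero_mul]
      · intro hmem; exact absurd (Finset.mem_univ _) hmem
    have hFint : ∀ x, Integrable (F x) μ := fun x =>
      bdd_int μ (((hFmeas x).mono (ℱ.le T) le_rfl).aestronglyMeasurable) (hFabs x)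
    have himmF : ∀ x, μ[F x | mA] =ᵐ[μ] μ[F x | (ℱ t : MeasurableSpace Ω)] := fun x =>
      himm (F x) (hFmeas x) ⟨1, hFabs x⟩ t ⟨ht0, htT⟩
    have hBF : ∀ x, μ[F x | mB] =ᵐ[μ] μ[F x | (ℱ t : MeasurableSpace Ω)] := by
      intro x
      refine ((condExp_condExp_of_le hBA hmA).symm).trans ?_
      refine (condExp_congr_ae (himmF x)).trans ?_
      rw [condExp_of_stronglyMeasurable hmB
        (stronglyMeasurable_condExp.mono (le_sup_left : (ℱ t : MeasurableSpace Ω) ≤ mB))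
        integrable_condExp]
    have hside : ∀ m : MeasurableSpace Ω, m ≤ m0 → m ≤ mC →
        (∀ x : Fin d, StronglyMeasurable[m] (ind X t x)) →
        (∀ x, μ[F x | m] =ᵐ[μ] μ[F x | (ℱ t : MeasurableSpace Ω)]) →
        μ[Z | m] =ᵐ[μ]
          fun ω => ∑ x : Fin d, ind X t x ω * (μ[F x | (ℱ t : MeasurableSpace Ω)]) ω := by
      intro m hm hmmC hindm hcond
      have h1 : μ[Z | m] =ᵐ[μ] μ[η' | m] :=
        ((condExp_condExp_of_le hmmC hmC).symm).trans (condExp_congr_ae hη')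
      refine h1.trans ?_
      rw [hsum]
      have hfs : ∀ x : Fin d, Integrable (fun ω => ind X t x ω * F x ω) μ := fun x =>
        bdd_int μ ((((measurable_ind X t x (hadp t)).mono (𝒢.le t) le_rfl).mul
          ((hFmeas x).mono (ℱ.le T) le_rfl)).aestronglyMeasurable)
          (fun ω => abs_mul_le_one (ind_abs_le X t x ω) (hFabs x ω))
      have h2 : μ[(fun ω => ∑ x : Fin d, ind X t x ω * F x ω) | m]
          =ᵐ[μ] ∑ x : Fin d, μ[(fun ω => ind X t x ω * F x ω) | m] := by
        have hcs := condExp_finsetSum (μ := μ) (m := m) (s := Finset.univ)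
          (f := fun (x : Fin d) (ω : Ω) => ind X t x ω * F x ω) (fun i _ => hfs i)
        refine (condExp_congr_ae (Filter.Eventually.of_forall fun ω => ?_)).trans hcs
        rw [Finset.sum_apply]
      refine h2.trans ?_
      have h3 : ∀ x : Fin d, μ[(fun ω => ind X t x ω * F x ω) | m]
          =ᵐ[μ] fun ω => ind X t x ω * (μ[F x | (ℱ t : MeasurableSpace Ω)]) ω := by
        intro x
        have hmul := condExp_mul_of_stronglyMeasurable_left (μ := μ) (hindm x) (hfs x) (hFint x)
        refine hmul.trans ?_
        filter_upwards [hcond x] with ω hω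
        show ind X t x ω * (μ[F x | m]) ω = ind X t x ω * (μ[F x | (ℱ t : MeasurableSpace Ω)]) ω
        rw [hω]
      have h4 := ae_all_iff.mpr h3
      filter_upwards [h4] with ω hω
      rw [Finset.sum_apply]
      exact Finset.sum_congr rfl fun x _ => hω x
    have hLHS := hside mA hmA hAC
      (fun x => ((measurable_ind X t x (hadp t)).mono
        (le_sup_right : (𝒢 t : MeasurableSpace Ω) ≤ mA) le_rfl).stronglyMeasurable)
      himmF
    have hXtc : Measurable[MeasurableSpace.comap (X t) ⊤] (X t) :=
      fun S _ => ⟨S, MeasurableSpace.measurableSet_top, rfl⟩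
    have hRHS := hside mB hmB hBC
      (fun x => ((measurable_ind X t x hXtc).mono
        (le_sup_right : MeasurableSpace.comap (X t) ⊤ ≤ mB) le_rfl).stronglyMeasurable)
      hBF
    exact hLHS.trans hRHS.symm
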